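/- For every h = 1,…,n, setting c = cos(hπ/(n+1)), the matrix P_h = (n; 1/n, c/(n−1)) is the unique matrix in 𝒯 closest to x_h x_hᵀ in the Frobenius norm, and its Frobenius norm is ‖P_h‖_F = √(1/n + (2/(n−1)) c²) = κ(h). In particular, the structured condition number κ^𝒯(λ_h) = ‖(x_h x_hᵀ)|𝒯‖_F of the eigenvalue λ_h equals √(1/n + (2/(n−1)) cos²(hπ/(n+1))). -/

import Mathlib

open Real Filter
open Finset

noncomputable def tridiag (n : ℕ) (d s : ℝ) : Matrix (Fin n) (Fin n) ℝ :=
  Matrix.of fun i j =>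
    if (i : ℕ) = (j : ℕ) then d
    else if (i : ℕ) + 1 = (j : ℕ) ∨ (j : ℕ) + 1 = (i : ℕ) then s else 0

noncomputable def lam (n : ℕ) (δ σ : ℝ) (h : ℕ) : ℝ :=
  δ + 2 * σ * Real.cos (h * Real.pi / (n + 1))

noncomputable def kap (n h : ℕ) : ℝ :=
  Real.sqrt (1 / (n : ℝ) + 2 / ((n : ℝ) - 1) * Real.cos (h * Real.pi / (n + 1)) ^ 2)

noncomputable def evec (n h : ℕ) : Fin n → ℝ :=
  fun k => Real.sqrt (2 / (n + 1)) * Real.sin (h * (k.1 + 1) * Real.pi / (n + 1))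

noncomputable def frobNorm {n : ℕ} (A : Matrix (Fin n) (Fin n) ℝ) : ℝ :=
  Real.sqrt (∑ i, ∑ j, A i j ^ 2)



noncomputable def Tn (d s : ℝ) (i j : ℕ) : ℝ :=
  if i = j then d else if i + 1 = j ∨ j + 1 = i then s else 0

lemma Tn_point (d s : ℝ) (i j : ℕ) (F : ℕ → ℕ → ℝ) :
    Tn d s i j * F i j =
      (if j = i then d * F i j else 0) + (if j = i + 1 then s * F i j else 0) +
        (if j + 1 = i then s * F i j else 0) := by
  unfold Tn
  split_ifs <;> first | omega | ring

lemma Tn_row (n : ℕ) (d s : ℝ) (i : ℕ) (hi : i < n) (F : ℕ → ℕ → ℝ) :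
    ∑ j ∈ range n, Tn d s i j * F i j =
      d * F i i + (if i + 1 < n then s * F i (i + 1) else 0) +
        (if 1 ≤ i then s * F i (i - 1) else 0) := by
  simp_rw [Tn_point, Finset.sum_add_distrib]
  congr 1
  · congr 1
    · rw [Finset.sum_ite_eq' (range n) i fun j => d * F i j]
      simp [Finset.mem_range.mpr hi]
    · rw [Finset.sum_ite_eq' (range n) (i+1) fun j => s * F i j]
      simp [Finset.mem_range]
  · cases i with
    | zero => simp
    | succ m =>
      have hm : m ∈ range n := Finset.mem_range.mpr (by omega)
      simp only [Nat.add_right_cancel_iff]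
      rw [Finset.sum_ite_eq' (range n) m fun j => s * F (m+1) j]
      simp [hm]

lemma Tn_sum (n : ℕ) (hn : 1 ≤ n) (d s : ℝ) (F : ℕ → ℕ → ℝ) :
    ∑ i ∈ range n, ∑ j ∈ range n, Tn d s i j * F i j =
      d * (∑ i ∈ range n, F i i) + s * (∑ k ∈ range (n-1), F k (k+1)) +
        s * (∑ k ∈ range (n-1), F (k+1) k) := by
  rw [Finset.sum_congr rfl fun i hi => Tn_row n d s i (Finset.mem_range.mp hi) F]
  rw [Finset.sum_add_distrib, Finset.sum_add_distrib]
  congr 1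
  · congr 1
    · rw [Finset.mul_sum]
    · obtain ⟨m, rfl⟩ : ∃ m, n = m + 1 := ⟨n - 1, by omega⟩
      rw [Finset.sum_range_succ]
      simp only [Nat.add_sub_cancel, lt_irrefl, if_false, add_zero]
      rw [Finset.mul_sum]
      exact Finset.sum_congr rfl fun i hi => by
        rw [if_pos (by simpa using Finset.mem_range.mp hi)]
  · obtain ⟨m, rfl⟩ : ∃ m, n = m + 1 := ⟨n - 1, by omega⟩
    rw [Finset.sum_range_succ']
    simp only [Nat.add_sub_cancel, Nat.le_add_left, if_pos, Nat.le_zero]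
    rw [Finset.mul_sum]
    simp


lemma cos_sum_aux (n h : ℕ) (h1 : 1 ≤ h) (hh : h ≤ n) (a : ℝ) :
    ∑ k ∈ range (n+1), Real.cos (a + 2 * k * (h * π / (n+1))) = 0 := by
  set θ : ℝ := h * π / (n + 1) with hθ
  set z : ℂ := Complex.exp (2 * θ * Complex.I) with hz
  have hn1 : ((n : ℝ) + 1) ≠ 0 := by positivity
  have hz1 : z ≠ 1 := by
    intro hcon
    rw [hz, Complex.exp_eq_one_iff] at hcon
    obtain ⟨m, hm⟩ := hcon
    have hcc : (2 * θ : ℂ) = m * (2 * π) := by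
      have h' : (2 * (θ:ℂ)) * Complex.I = ((m:ℂ) * (2 * (π:ℂ))) * Complex.I := by
        linear_combination hm
      exact mul_right_cancel₀ Complex.I_ne_zero h'
    have hre : (2 * θ : ℝ) = m * (2 * π) := by exact_mod_cast hcc
    rw [hθ] at hre
    have hπ : (π : ℝ) ≠ 0 := Real.pi_ne_zero
    have : (h : ℝ) = m * (n + 1) := by
      field_simp at hre
      have h2 : π * (2 * (h:ℝ)) = π * (2 * (m * (n+1))) := by linear_combination (2 * π) * hre
      have := mul_left_cancel₀ hπ h2
      linarith
    have : (h : ℤ) = m * (n + 1) := by exact_mod_cast this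
    have h1' : 1 ≤ (h : ℤ) := by exact_mod_cast h1
    have hh' : (h : ℤ) ≤ n := by exact_mod_cast hh
    rcases le_or_gt m 0 with hm0 | hm0
    · nlinarith
    · nlinarith
  have hzn : z ^ (n + 1) = 1 := by
    rw [hz, ← Complex.exp_nat_mul]
    have : ((n : ℂ) + 1) * (2 * θ * Complex.I) = (h : ℤ) * (2 * π * Complex.I) := by
      rw [hθ]
      push_cast
      have : ((n : ℂ) + 1) ≠ 0 := by exact_mod_cast (by exact_mod_cast hn1 : ((n:ℝ)+1 : ℂ) ≠ 0)
      field_simp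
    push_cast at this ⊢
    rw [this]
    exact_mod_cast Complex.exp_int_mul_two_pi_mul_I h
  have hsum : ∑ k ∈ range (n+1), z ^ k = 0 := by
    rw [geom_sum_eq hz1, hzn]
    simp
  have key : ∑ k ∈ range (n+1), Complex.exp (((a + 2 * k * θ : ℝ) : ℂ) * Complex.I) = 0 := by
    have : ∀ k : ℕ, Complex.exp (((a + 2 * k * θ : ℝ) : ℂ) * Complex.I)
        = Complex.exp ((a : ℂ) * Complex.I) * z ^ k := by
      intro k
      rw [hz, ← Complex.exp_nat_mul, ← Complex.exp_add]
      congr 1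
      push_cast
      ring
    simp_rw [this]
    rw [← Finset.mul_sum, hsum, mul_zero]
  have hre := congrArg Complex.re key
  rw [Complex.re_sum] at hre
  have h2 : ∀ k ∈ range (n+1),
      (Complex.exp (((a + 2 * (k:ℕ) * θ : ℝ) : ℂ) * Complex.I)).re = Real.cos (a + 2 * k * θ) :=
    fun k _ => Complex.exp_ofReal_mul_I_re _
  rw [← Finset.sum_congr rfl h2]
  simpa using hre


noncomputable def xv (n h k : ℕ) : ℝ :=
  Real.sqrt (2 / (n + 1)) * Real.sin (h * ((k : ℝ) + 1) * π / (n + 1))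

lemma sin_sq_eq (x : ℝ) : Real.sin x ^ 2 = 1 / 2 - Real.cos (2 * x) / 2 := by
  have h1 := Real.cos_two_mul x
  have h2 := Real.sin_sq_add_cos_sq x
  nlinarith

lemma sin_mul_sin (A B : ℝ) :
    Real.sin A * Real.sin B = (Real.cos (A - B) - Real.cos (A + B)) / 2 := by
  have h1 := Real.cos_sub A B
  have h2 := Real.cos_add A B
  linarith

lemma xv_norm (n h : ℕ) (hn : 2 ≤ n) (h1 : 1 ≤ h) (hh : h ≤ n) :
    ∑ k ∈ range n, xv n h k * xv n h k = 1 := by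
  set θ : ℝ := h * π / (n + 1) with hθ
  have hn1 : (0:ℝ) < (n : ℝ) + 1 := by positivity
  have hs : Real.sqrt (2 / (n + 1)) * Real.sqrt (2 / (n + 1)) = 2 / ((n:ℝ) + 1) :=
    Real.mul_self_sqrt (by positivity)
  have harg : ∀ k : ℕ, (h : ℝ) * ((k : ℝ) + 1) * π / (n + 1) = ((k:ℝ) + 1) * θ := by
    intro k; rw [hθ]; ring
  have hcos : ∑ k ∈ range n, Real.cos (2 * ((k:ℝ) + 1) * θ) = -1 := by
    have h0 := cos_sum_aux n h h1 hh 0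
    rw [Finset.sum_range_succ'] at h0
    simp only [Nat.cast_zero, mul_zero, zero_mul, zero_add, Real.cos_zero] at h0
    have e : ∀ k ∈ range n, Real.cos (2 * ((k:ℝ) + 1) * θ)
        = Real.cos (2 * ((k+1:ℕ):ℝ) * ((h:ℝ) * π / ((n:ℝ) + 1))) := by
      intro k _; rw [hθ]; push_cast; ring_nf
    rw [Finset.sum_congr rfl e]
    linarith [h0]
  have hsin : ∑ k ∈ range n, Real.sin (((k:ℝ) + 1) * θ) ^ 2 = ((n:ℝ) + 1) / 2 := by
    have : ∀ k ∈ range n, Real.sin (((k:ℝ) + 1) * θ) ^ 2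
        = 1 / 2 - Real.cos (2 * ((k:ℝ) + 1) * θ) / 2 := by
      intro k _; rw [sin_sq_eq]; ring_nf
    rw [Finset.sum_congr rfl this, Finset.sum_sub_distrib, Finset.sum_const,
      ← Finset.sum_div, hcos]
    simp
    ring
  calc ∑ k ∈ range n, xv n h k * xv n h k
      = ∑ k ∈ range n, (2 / ((n:ℝ)+1)) * Real.sin (((k:ℝ) + 1) * θ) ^ 2 := by
        apply Finset.sum_congr rfl; intro k _
        unfold xv
        rw [harg]
        have e2 : Real.sqrt (2/((n:ℝ)+1)) * Real.sin (((k:ℝ)+1)*θ) *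
            (Real.sqrt (2/((n:ℝ)+1)) * Real.sin (((k:ℝ)+1)*θ))
            = (Real.sqrt (2/((n:ℝ)+1)) * Real.sqrt (2/((n:ℝ)+1))) *
              Real.sin (((k:ℝ)+1)*θ)^2 := by ring
        rw [e2, hs]
    _ = (2 / ((n:ℝ)+1)) * (((n:ℝ) + 1) / 2) := by rw [← Finset.mul_sum, hsin]
    _ = 1 := by field_simp



lemma xv_adj (n h : ℕ) (hn : 2 ≤ n) (h1 : 1 ≤ h) (hh : h ≤ n) :
    ∑ k ∈ range (n-1), xv n h k * xv n h (k+1) = Real.cos ((h:ℝ) * π / ((n:ℝ) + 1)) := by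
  set θ : ℝ := h * π / (n + 1) with hθ
  have hn1 : (0:ℝ) < (n : ℝ) + 1 := by positivity
  have hs : Real.sqrt (2 / (n + 1)) * Real.sqrt (2 / (n + 1)) = 2 / ((n:ℝ) + 1) :=
    Real.mul_self_sqrt (by positivity)
  -- cos((2n+1)θ) = cos θ
  have hlast : Real.cos ((2 * (n:ℝ) + 1) * θ) = Real.cos θ := by
    have harg : (2 * (n:ℝ) + 1) * θ = -θ + (h:ℤ) * (2 * π) := by
      rw [hθ]; push_cast; field_simp; ring
    rw [harg, Real.cos_add_int_mul_two_pi, Real.cos_neg]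
  -- sum over range n of cos((2k+3)θ) type
  have hA : ∑ k ∈ range n, Real.cos (θ + 2 * ((k+1:ℕ):ℝ) * θ) = -Real.cos θ := by
    have h0 := cos_sum_aux n h h1 hh θ
    rw [Finset.sum_range_succ'] at h0
    simp only [Nat.cast_zero, mul_zero, zero_mul, add_zero, Real.cos_zero] at h0
    rw [← hθ] at h0
    linarith [h0]
  have hB : ∑ k ∈ range (n-1), Real.cos (θ + 2 * ((k+1:ℕ):ℝ) * θ) = -2 * Real.cos θ := by
    obtain ⟨m, hm⟩ : ∃ m, n = m + 1 := ⟨n - 1, by omega⟩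
    subst hm
    rw [Finset.sum_range_succ] at hA
    have e : Real.cos (θ + 2 * ((m+1:ℕ):ℝ) * θ) = Real.cos θ := by
      have : θ + 2 * ((m+1:ℕ):ℝ) * θ = (2 * ((m:ℝ)+1) + 1) * θ := by push_cast; ring
      rw [this]
      have : (2 * ((m:ℝ)+1) + 1) = (2 * (((m+1:ℕ)):ℝ) + 1) := by push_cast; ring
      rw [this]
      exact hlast
    simp only [Nat.add_sub_cancel]
    rw [e] at hA
    linarith [hA]
  -- main computation
  have key : ∀ k ∈ range (n-1), xv n h k * xv n h (k+1)
      = (2 / ((n:ℝ)+1)) * ((Real.cos θ - Real.cos (θ + 2 * ((k+1:ℕ):ℝ) * θ)) / 2) := by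
    intro k _
    unfold xv
    have harg1 : (h:ℝ) * ((k:ℝ) + 1) * π / ((n:ℝ) + 1) = ((k:ℝ) + 1) * θ := by rw [hθ]; ring
    have harg2 : (h:ℝ) * (((k+1:ℕ):ℝ) + 1) * π / ((n:ℝ) + 1) = ((k:ℝ) + 2) * θ := by
      rw [hθ]; push_cast; ring
    rw [harg1, harg2]
    have e2 : Real.sqrt (2/((n:ℝ)+1)) * Real.sin (((k:ℝ)+1)*θ) *
        (Real.sqrt (2/((n:ℝ)+1)) * Real.sin (((k:ℝ)+2)*θ))
        = (Real.sqrt (2/((n:ℝ)+1)) * Real.sqrt (2/((n:ℝ)+1))) *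
          (Real.sin (((k:ℝ)+1)*θ) * Real.sin (((k:ℝ)+2)*θ)) := by ring
    rw [e2, hs, sin_mul_sin]
    have e3 : ((k:ℝ)+1)*θ - ((k:ℝ)+2)*θ = -θ := by ring
    have e4 : ((k:ℝ)+1)*θ + ((k:ℝ)+2)*θ = θ + 2 * ((k+1:ℕ):ℝ) * θ := by push_cast; ring
    rw [e3, e4, Real.cos_neg]
  rw [Finset.sum_congr rfl key, ← Finset.mul_sum]
  rw [← Finset.sum_div, Finset.sum_sub_distrib, Finset.sum_const, hB]
  simp only [nsmul_eq_mul, Finset.card_range]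
  have hcard : ((n-1:ℕ):ℝ) = (n:ℝ) - 1 := by
    push_cast [Nat.cast_sub (by omega : (1:ℕ) ≤ n)]
    ring
  rw [hcard]
  field_simp
  ring



lemma Tn_diag (d s : ℝ) (i : ℕ) : Tn d s i i = d := by simp [Tn]

lemma Tn_sup (d s : ℝ) (k : ℕ) : Tn d s k (k+1) = s := by
  unfold Tn; rw [if_neg (by omega), if_pos (Or.inl rfl)]

lemma Tn_sub (d s : ℝ) (k : ℕ) : Tn d s (k+1) k = s := by
  unfold Tn; rw [if_neg (by omega), if_pos (Or.inr rfl)]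

lemma cast_pred (n : ℕ) (hn : 1 ≤ n) : ((n-1:ℕ):ℝ) = (n:ℝ) - 1 := by
  push_cast [Nat.cast_sub hn]; ring

lemma expand_sum (n : ℕ) (hn : 2 ≤ n) (x : ℕ → ℝ) (c : ℝ)
    (hx1 : ∑ i ∈ range n, x i * x i = 1)
    (hx2 : ∑ k ∈ range (n-1), x k * x (k+1) = c)
    (d s : ℝ) :
    ∑ i ∈ range n, ∑ j ∈ range n, (x i * x j - Tn d s i j)^2
      = (∑ i ∈ range n, ∑ j ∈ range n, (x i * x j)^2) - 2*(d + 2*c*s)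
        + ((n:ℝ)*d^2 + 2*((n:ℝ)-1)*s^2) := by
  have pt : ∀ i j : ℕ, (x i * x j - Tn d s i j)^2
      = (x i * x j)^2 - Tn d s i j * (2 * (x i * x j)) + Tn d s i j * Tn d s i j := by
    intro i j; ring
  simp_rw [pt, Finset.sum_add_distrib, Finset.sum_sub_distrib]
  have hcross : ∑ i ∈ range n, ∑ j ∈ range n, Tn d s i j * (2 * (x i * x j))
      = 2*(d + 2*c*s) := by
    rw [Tn_sum n (by omega) d s (fun i j => 2 * (x i * x j))]
    have e1 : ∑ i ∈ range n, 2 * (x i * x i) = 2 := by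
      rw [← Finset.mul_sum, hx1]; ring
    have e2 : ∑ k ∈ range (n-1), 2 * (x k * x (k+1)) = 2*c := by
      rw [← Finset.mul_sum, hx2]
    have e3 : ∑ k ∈ range (n-1), 2 * (x (k+1) * x k) = 2*c := by
      rw [← e2]; apply Finset.sum_congr rfl; intro k _; ring
    rw [e1, e2, e3]; ring
  have hTT : ∑ i ∈ range n, ∑ j ∈ range n, Tn d s i j * Tn d s i j
      = (n:ℝ)*d^2 + 2*((n:ℝ)-1)*s^2 := by
    rw [Tn_sum n (by omega) d s (Tn d s)]
    simp only [Tn_diag, Tn_sup, Tn_sub, Finset.sum_const, Finset.card_range, nsmul_eq_mul]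
    rw [cast_pred n (by omega)]
    ring
  rw [hcross, hTT]

lemma key_id (n : ℕ) (hn : 2 ≤ n) (x : ℕ → ℝ) (c : ℝ)
    (hx1 : ∑ i ∈ range n, x i * x i = 1)
    (hx2 : ∑ k ∈ range (n-1), x k * x (k+1) = c)
    (d s : ℝ) :
    ∑ i ∈ range n, ∑ j ∈ range n, (x i * x j - Tn d s i j)^2
      = (∑ i ∈ range n, ∑ j ∈ range n,
          (x i * x j - Tn (1/(n:ℝ)) (c/((n:ℝ)-1)) i j)^2)
        + (n:ℝ)*(d - 1/(n:ℝ))^2 + 2*((n:ℝ)-1)*(s - c/((n:ℝ)-1))^2 := by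
  rw [expand_sum n hn x c hx1 hx2 d s, expand_sum n hn x c hx1 hx2 _ _]
  have h0 : (n:ℝ) ≠ 0 := by positivity
  have h1 : (n:ℝ) - 1 ≠ 0 := by
    have : (2:ℝ) ≤ (n:ℝ) := by exact_mod_cast hn
    linarith
  field_simp
  ring

/-- `P_h = (n; 1/n, c/(n−1))` is the unique matrix in `𝒯` closest to `x_h x_hᵀ`
in the Frobenius norm, and `‖P_h‖_F = √(1/n + (2/(n−1)) c²) = κ(h)`, the structured condition
number of the eigenvalue `λ_h`. -/
theorem stmt_2 (n : ℕ) (hn : 2 ≤ n) (h : ℕ) (h1 : 1 ≤ h) (hh : h ≤ n)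
    (c : ℝ) (hc : c = Real.cos (h * Real.pi / (n + 1)))
    (P : Matrix (Fin n) (Fin n) ℝ)
    (hP : P = tridiag n (1 / (n : ℝ)) (c / ((n : ℝ) - 1)))
    (X : Matrix (Fin n) (Fin n) ℝ)
    (hX : X = Matrix.of fun i j => evec n h i * evec n h j) :
    (∀ d s : ℝ, frobNorm (X - P) ≤ frobNorm (X - tridiag n d s)) ∧
    (∀ d s : ℝ, frobNorm (X - tridiag n d s) = frobNorm (X - P) → tridiag n d s = P) ∧
    frobNorm P = Real.sqrt (1 / (n : ℝ) + 2 / ((n : ℝ) - 1) * c ^ 2) ∧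
    frobNorm P = kap n h := by
  have hn0 : ((n:ℝ)) ≠ 0 := by positivity
  have hn2 : (2:ℝ) ≤ (n:ℝ) := by exact_mod_cast hn
  have hnm1 : (0:ℝ) < (n:ℝ) - 1 := by linarith
  have hnm1' : ((n:ℝ)) - 1 ≠ 0 := ne_of_gt hnm1
  have hx1 := xv_norm n h hn h1 hh
  have hx2 : ∑ k ∈ Finset.range (n-1), xv n h k * xv n h (k+1) = c := by
    rw [hc]; exact xv_adj n h hn h1 hh
  -- conversion of Fin double sums to range double sums
  have conv : ∀ G : ℕ → ℕ → ℝ,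
      (∑ i : Fin n, ∑ j : Fin n, G i j) = ∑ i ∈ Finset.range n, ∑ j ∈ Finset.range n, G i j := by
    intro G
    rw [← Fin.sum_univ_eq_sum_range (fun i => ∑ j ∈ Finset.range n, G i j) n]
    exact Finset.sum_congr rfl fun i _ => Fin.sum_univ_eq_sum_range (fun j => G i j) n
  -- entries
  have hentry : ∀ (d s : ℝ) (i j : Fin n),
      (X - tridiag n d s) i j = xv n h i * xv n h j - Tn d s i j := by
    intro d s i j
    rw [hX]
    simp only [Matrix.sub_apply, Matrix.of_apply, tridiag]
    rfl
  have hbridge : ∀ d s : ℝ,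
      (∑ i : Fin n, ∑ j : Fin n, ((X - tridiag n d s) i j)^2)
        = ∑ i ∈ Finset.range n, ∑ j ∈ Finset.range n, (xv n h i * xv n h j - Tn d s i j)^2 := by
    intro d s
    rw [← conv (fun i j => (xv n h i * xv n h j - Tn d s i j)^2)]
    exact Finset.sum_congr rfl fun i _ => Finset.sum_congr rfl fun j _ => by
      rw [hentry d s i j]
  have hkey : ∀ d s : ℝ,
      (∑ i : Fin n, ∑ j : Fin n, ((X - tridiag n d s) i j)^2)
        = (∑ i : Fin n, ∑ j : Fin n, ((X - P) i j)^2)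
          + (n:ℝ)*(d - 1/(n:ℝ))^2 + 2*((n:ℝ)-1)*(s - c/((n:ℝ)-1))^2 := by
    intro d s
    rw [hbridge d s, hP, hbridge (1/(n:ℝ)) (c/((n:ℝ)-1))]
    exact key_id n hn (xv n h) c hx1 hx2 d s
  have hnonneg : ∀ (A : Matrix (Fin n) (Fin n) ℝ),
      (0:ℝ) ≤ ∑ i : Fin n, ∑ j : Fin n, (A i j)^2 := by
    intro A
    exact Finset.sum_nonneg fun i _ => Finset.sum_nonneg fun j _ => sq_nonneg _
  -- Frobenius norm of P
  have hPsum : (∑ i : Fin n, ∑ j : Fin n, (P i j)^2)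
      = 1 / (n : ℝ) + 2 / ((n : ℝ) - 1) * c ^ 2 := by
    have hPentry : ∀ i j : Fin n, (P i j)^2
        = Tn (1/(n:ℝ)) (c/((n:ℝ)-1)) i j * Tn (1/(n:ℝ)) (c/((n:ℝ)-1)) i j := by
      intro i j
      rw [hP, sq]
      rfl
    rw [Finset.sum_congr rfl fun i _ => Finset.sum_congr rfl fun j _ => hPentry i j,
      conv (fun i j => Tn (1/(n:ℝ)) (c/((n:ℝ)-1)) i j * Tn (1/(n:ℝ)) (c/((n:ℝ)-1)) i j),
      Tn_sum n (by omega) _ _ _]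
    simp only [Tn_diag, Tn_sup, Tn_sub, Finset.sum_const, Finset.card_range, nsmul_eq_mul]
    rw [cast_pred n (by omega)]
    field_simp
    ring
  refine ⟨?_, ?_, ?_, ?_⟩
  · intro d s
    unfold frobNorm
    apply Real.sqrt_le_sqrt
    rw [hkey d s]
    nlinarith [sq_nonneg (d - 1/(n:ℝ)), sq_nonneg (s - c/((n:ℝ)-1)), hn2]
  · intro d s heq
    unfold frobNorm at heq
    have hsums : (∑ i : Fin n, ∑ j : Fin n, ((X - tridiag n d s) i j)^2)
        = ∑ i : Fin n, ∑ j : Fin n, ((X - P) i j)^2 :=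
      (Real.sqrt_inj (hnonneg _) (hnonneg _)).mp heq
    rw [hkey d s] at hsums
    have hd : d = 1/(n:ℝ) := by nlinarith [sq_nonneg (d - 1/(n:ℝ)), sq_nonneg (s - c/((n:ℝ)-1))]
    have hs : s = c/((n:ℝ)-1) := by nlinarith [sq_nonneg (d - 1/(n:ℝ)), sq_nonneg (s - c/((n:ℝ)-1))]
    rw [hd, hs, hP]
  · unfold frobNorm
    rw [hPsum]
  · unfold frobNorm
    rw [hPsum, kap, hc]
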